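/- Let g^j for j ≥ 0 be random vectors in R^d with E‖μ − g^j‖² ≤ V/2^j for all j and some constant V > 0, where μ ∈ R^d is fixed. Let Q ~ Geom(1/2) be independent, T_max ≥ 2, and define g_MLMC = g^0 + 𝟙{2^Q ≤ T_max}·2^Q(g^Q − g^{Q−1}). Then E‖μ − g_MLMC‖² ≤ 2V + 4∑_{j=1}^{⌊log₂ T_max⌋} 2^j·(V/2^j + V/2^{j−1}) ≤ 14V(1 + ⌊log₂ T_max⌋), i.e., E‖μ − g_MLMC‖² = O(V log₂ T_max). -/

import Mathlib

open MeasureTheory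
open scoped BigOperators

/-- second-moment bound for the MLMC estimator. With Q geometric
(Pr[Q=j] = 2^{-j}) independent of the levels, E‖μ − g_MLMC‖² is bounded by
2V + 4∑_{j=1}^{⌊log₂T_max⌋} 2^j (V/2^j + V/2^{j−1}) ≤ 14V(1+⌊log₂T_max⌋). -/
theorem stmt_6 {d : ℕ} {Ω : Type*} [MeasurableSpace Ω] (μ : Measure Ω)
    [IsProbabilityMeasure μ]
    (g : ℕ → Ω → EuclideanSpace ℝ (Fin d)) (μ0 : EuclideanSpace ℝ (Fin d))
    (V : ℝ) (hV : 0 < V) (Tmax : ℕ) (hT : 2 ≤ Tmax)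
    (hint : ∀ j, Integrable (fun ω => ‖μ0 - g j ω‖^2) μ)
    (hmse : ∀ j, ∫ ω, ‖μ0 - g j ω‖^2 ∂μ ≤ V / 2^j) :
    (∑' j : ℕ, if 1 ≤ j then ((1:ℝ)/2)^j *
        ∫ ω, ‖μ0 - (g 0 ω +
          (if 2^j ≤ Tmax then ((2:ℝ)^j) • (g j ω - g (j-1) ω) else 0))‖^2 ∂μ
      else 0)
      ≤ 2*V + 4 * ∑ j ∈ Finset.Icc 1 (Nat.log 2 Tmax),
          (2:ℝ)^j * (V/2^j + V/2^(j-1)) ∧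
    2*V + 4 * ∑ j ∈ Finset.Icc 1 (Nat.log 2 Tmax),
        (2:ℝ)^j * (V/2^j + V/2^(j-1))
      ≤ 14 * V * (1 + (Nat.log 2 Tmax : ℝ)) := by
  set L := Nat.log 2 Tmax with hLdef
  have hTne : Tmax ≠ 0 := by omega
  have hVnn : (0:ℝ) ≤ V := hV.le
  have hL1 : 1 ≤ L := Nat.le_log_of_pow_le one_lt_two (by simpa using hT)
  -- sum term simplification
  have hterm : ∀ j ∈ Finset.Icc 1 L, (2:ℝ)^j * (V/2^j + V/2^(j-1)) = 3*V := by
    intro j hj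
    obtain ⟨k, rfl⟩ : ∃ k, j = k+1 := ⟨j-1, by have := (Finset.mem_Icc.mp hj).1; omega⟩
    have h2 : (0:ℝ) < 2^k := by positivity
    simp only [Nat.add_sub_cancel]
    field_simp
    ring
  have hsum : ∑ j ∈ Finset.Icc 1 L, (2:ℝ)^j * (V/2^j + V/2^(j-1)) = 3*V*L := by
    rw [Finset.sum_congr rfl hterm, Finset.sum_const, Nat.card_Icc]
    simp
    ring
  constructor
  · -- main bound
    set f : ℕ → ℝ := fun j => if 1 ≤ j then ((1:ℝ)/2)^j *
        ∫ ω, ‖μ0 - (g 0 ω +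
          (if 2^j ≤ Tmax then ((2:ℝ)^j) • (g j ω - g (j-1) ω) else 0))‖^2 ∂μ
      else 0 with hfdef
    set p1 : ℕ → ℝ := fun j => if 1 ≤ j then 2*V*((1:ℝ)/2)^j else 0 with hp1
    set p2 : ℕ → ℝ := fun j => if 1 ≤ j ∧ j ≤ L then 4*(2:ℝ)^j*(V/2^j + V/2^(j-1)) else 0 with hp2
    -- key integral bound when 2^j ≤ Tmax
    have key : ∀ j : ℕ, 1 ≤ j → 2^j ≤ Tmax →
        ∫ ω, ‖μ0 - (g 0 ω + ((2:ℝ)^j) • (g j ω - g (j-1) ω))‖^2 ∂μ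
          ≤ 2*V + 4*(4:ℝ)^j*(V/2^j + V/2^(j-1)) := by
      intro j hj hjT
      have hptw : ∀ ω, ‖μ0 - (g 0 ω + ((2:ℝ)^j) • (g j ω - g (j-1) ω))‖^2
          ≤ 2*‖μ0 - g 0 ω‖^2 + 4*(4:ℝ)^j*(‖μ0 - g j ω‖^2 + ‖μ0 - g (j-1) ω‖^2) := by
        intro ω
        have e1 : μ0 - (g 0 ω + ((2:ℝ)^j) • (g j ω - g (j-1) ω))
            = (μ0 - g 0 ω) - ((2:ℝ)^j) • (g j ω - g (j-1) ω) := by abel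
        have e2 : g j ω - g (j-1) ω = (μ0 - g (j-1) ω) - (μ0 - g j ω) := by abel
        have h1 : ‖μ0 - (g 0 ω + ((2:ℝ)^j) • (g j ω - g (j-1) ω))‖
            ≤ ‖μ0 - g 0 ω‖ + (2:ℝ)^j * ‖g j ω - g (j-1) ω‖ := by
          rw [e1]
          refine (norm_sub_le _ _).trans ?_
          rw [norm_smul, Real.norm_eq_abs, abs_of_pos (by positivity)]
        have h2 : ‖g j ω - g (j-1) ω‖ ≤ ‖μ0 - g (j-1) ω‖ + ‖μ0 - g j ω‖ := by
          rw [e2]; exact norm_sub_le _ _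
        have h44 : ((2:ℝ)^j) * ((2:ℝ)^j) = (4:ℝ)^j := by
          rw [← mul_pow]; norm_num
        have hn0 := norm_nonneg (μ0 - (g 0 ω + ((2:ℝ)^j) • (g j ω - g (j-1) ω)))
        have hn1 := norm_nonneg (μ0 - g 0 ω)
        have hn2 := norm_nonneg (μ0 - g j ω)
        have hn3 := norm_nonneg (μ0 - g (j-1) ω)
        have hn4 := norm_nonneg (g j ω - g (j-1) ω)
        have hp : (0:ℝ) < 2^j := by positivity
        nlinarith [sq_nonneg (‖μ0 - g 0 ω‖ - (2:ℝ)^j * ‖g j ω - g (j-1) ω‖),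
          sq_nonneg (‖μ0 - g j ω‖ - ‖μ0 - g (j-1) ω‖),
          mul_le_mul h1 h1 hn0 (by positivity),
          mul_le_mul h2 h2 hn4 (by positivity),
          mul_pos hp hp]
      have hintR : Integrable (fun ω => 2*‖μ0 - g 0 ω‖^2
          + 4*(4:ℝ)^j*(‖μ0 - g j ω‖^2 + ‖μ0 - g (j-1) ω‖^2)) μ :=
        ((hint 0).const_mul 2).add (((hint j).add (hint (j-1))).const_mul _)
      calc ∫ ω, ‖μ0 - (g 0 ω + ((2:ℝ)^j) • (g j ω - g (j-1) ω))‖^2 ∂μ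
          ≤ ∫ ω, (2*‖μ0 - g 0 ω‖^2
              + 4*(4:ℝ)^j*(‖μ0 - g j ω‖^2 + ‖μ0 - g (j-1) ω‖^2)) ∂μ := by
            refine integral_mono_of_nonneg ?_ hintR ?_
            · exact Filter.Eventually.of_forall fun ω => by positivity
            · exact Filter.Eventually.of_forall hptw
        _ = 2*(∫ ω, ‖μ0 - g 0 ω‖^2 ∂μ)
              + 4*(4:ℝ)^j*((∫ ω, ‖μ0 - g j ω‖^2 ∂μ) + (∫ ω, ‖μ0 - g (j-1) ω‖^2 ∂μ)) := by
            have hA : Integrable (fun ω => 2*‖μ0 - g 0 ω‖^2) μ := (hint 0).const_mul 2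
            have hB : Integrable (fun ω => 4*(4:ℝ)^j*(‖μ0 - g j ω‖^2 + ‖μ0 - g (j-1) ω‖^2)) μ := by
              have h' : Integrable (fun ω => ‖μ0 - g j ω‖^2 + ‖μ0 - g (j-1) ω‖^2) μ :=
                (hint j).add (hint (j-1))
              exact h'.const_mul _
            rw [integral_add hA hB, integral_const_mul, integral_const_mul,
              integral_add (hint j) (hint (j-1))]
        _ ≤ 2*V + 4*(4:ℝ)^j*(V/2^j + V/2^(j-1)) := by
            have h0 := (hmse 0)
            have hj' := hmse j
            have hj'' := hmse (j-1)
            simp only [pow_zero] at h0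
            have h4p : (0:ℝ) < 4*(4:ℝ)^j := by positivity
            have : V/1 = V := div_one V
            nlinarith [hmse j, hmse (j-1)]
    -- f ≤ p1 + p2
    have hfle : ∀ j, f j ≤ p1 j + p2 j := by
      intro j
      rcases Nat.eq_zero_or_pos j with rfl | hj
      · simp [hfdef, hp1, hp2]
      · have hj1 : 1 ≤ j := hj
        simp only [hfdef, hp1, hp2, if_pos hj1]
        by_cases hc : 2^j ≤ Tmax
        · have hjL : j ≤ L := (Nat.le_log_iff_pow_le one_lt_two hTne).mpr hc
          simp only [if_pos hc, if_pos (show 1 ≤ j ∧ j ≤ L from ⟨hj1, hjL⟩)]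
          have hk := key j hj1 hc
          have hhalf : (0:ℝ) < ((1:ℝ)/2)^j := by positivity
          have e : ((1:ℝ)/2)^j * (2*V + 4*(4:ℝ)^j*(V/2^j + V/2^(j-1)))
              = 2*V*((1:ℝ)/2)^j + 4*(2:ℝ)^j*(V/2^j + V/2^(j-1)) := by
            have h24 : ((1:ℝ)/2)^j * (4:ℝ)^j = (2:ℝ)^j := by
              rw [← mul_pow]; norm_num
            calc ((1:ℝ)/2)^j * (2*V + 4*(4:ℝ)^j*(V/2^j + V/2^(j-1)))
                = 2*V*((1:ℝ)/2)^j + 4*(((1:ℝ)/2)^j * (4:ℝ)^j)*(V/2^j + V/2^(j-1)) := by ring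
              _ = _ := by rw [h24]
          calc ((1:ℝ)/2)^j * ∫ ω, ‖μ0 - (g 0 ω + ((2:ℝ)^j) • (g j ω - g (j-1) ω))‖^2 ∂μ
              ≤ ((1:ℝ)/2)^j * (2*V + 4*(4:ℝ)^j*(V/2^j + V/2^(j-1))) :=
                mul_le_mul_of_nonneg_left hk hhalf.le
            _ = _ := e
        · have hjL : ¬ (j ≤ L) := fun h =>
            hc ((Nat.le_log_iff_pow_le one_lt_two hTne).mp h)
          simp only [if_neg hc, if_neg (show ¬(1 ≤ j ∧ j ≤ L) by tauto)]
          have : ∫ ω, ‖μ0 - (g 0 ω + (0 : EuclideanSpace ℝ (Fin d)))‖^2 ∂μ ≤ V := by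
            simpa using (hmse 0)
          have hhalf : (0:ℝ) ≤ ((1:ℝ)/2)^j := by positivity
          have := mul_le_mul_of_nonneg_left this hhalf
          nlinarith [this, hhalf, hVnn]
    have hfnn : ∀ j, 0 ≤ f j := by
      intro j
      simp only [hfdef]
      split
      · refine mul_nonneg (by positivity) (integral_nonneg fun ω => by positivity)
      · exact le_rfl
    have hp1sum : Summable p1 := by
      refine Summable.of_nonneg_of_le (fun j => ?_) (fun j => ?_)
        ((summable_geometric_of_lt_one (by norm_num) (by norm_num : (1:ℝ)/2 < 1)).mul_left (2*V))
      · simp only [hp1]; split <;> positivity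
      · simp only [hp1]; split
        · exact le_rfl
        · positivity
    have hp2zero : ∀ j ∉ Finset.Icc 1 L, p2 j = 0 := by
      intro j hj
      rw [Finset.mem_Icc] at hj
      simp only [hp2, if_neg hj]
    have hp2sum : Summable p2 := summable_of_ne_finset_zero hp2zero
    have htsum_p1 : ∑' j, p1 j = 2*V := by
      rw [Summable.tsum_eq_zero_add hp1sum]
      have h0 : p1 0 = 0 := by simp [hp1]
      have hs : ∀ n : ℕ, p1 (n+1) = V * ((1:ℝ)/2)^n := by
        intro n
        simp only [hp1, if_pos (Nat.succ_le_succ (Nat.zero_le n)), pow_succ]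
        ring
      rw [h0, tsum_congr hs, tsum_mul_left,
        tsum_geometric_of_lt_one (by norm_num) (by norm_num : (1:ℝ)/2 < 1)]
      norm_num
      ring
    have htsum_p2 : ∑' j, p2 j
        = ∑ j ∈ Finset.Icc 1 L, 4*(2:ℝ)^j*(V/2^j + V/2^(j-1)) := by
      rw [tsum_eq_sum hp2zero]
      refine Finset.sum_congr rfl fun j hj => ?_
      rw [Finset.mem_Icc] at hj
      simp only [hp2, if_pos hj]
    have hsumadd : Summable (fun j => p1 j + p2 j) := hp1sum.add hp2sum
    calc ∑' j, f j ≤ ∑' j, (p1 j + p2 j) :=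
          Summable.tsum_le_tsum hfle (Summable.of_nonneg_of_le hfnn hfle hsumadd) hsumadd
      _ = (∑' j, p1 j) + ∑' j, p2 j := Summable.tsum_add hp1sum hp2sum
      _ = 2*V + ∑ j ∈ Finset.Icc 1 L, 4*(2:ℝ)^j*(V/2^j + V/2^(j-1)) := by
          rw [htsum_p1, htsum_p2]
      _ = 2*V + 4 * ∑ j ∈ Finset.Icc 1 L, (2:ℝ)^j*(V/2^j + V/2^(j-1)) := by
          rw [Finset.mul_sum]
          congr 1
          exact Finset.sum_congr rfl fun j _ => by ring
  · -- second conjunct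
    rw [hsum]
    have hLnn : (0:ℝ) ≤ (L:ℝ) := Nat.cast_nonneg L
    nlinarith [hLnn, hVnn]
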